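/- arXiv:2005.08283 — 3 statements merged into one kernel-verified Lean document; each statement's English description precedes it below -/
import Mathlib

section
/- Let C be a left ideal of the group algebra F[G] of a finite group G. Then the dual code C^⊥ = { x ∈ F[G] : dot(c, x) = 0 for all c ∈ C } equals the image under the star antiautomorphism of the right annihilator rAnn(C) = { x ∈ F[G] : cx = 0 for all c ∈ C }. -/
/-- The star map on a group algebra: `(∑ x_g g)* = ∑ x_{g⁻¹} g`. -/
noncomputable def starMA (F : Type*) [Field F] (G : Type*) [Group G]
    (x : MonoidAlgebra F G) : MonoidAlgebra F G :=
  MonoidAlgebra.ofCoeff (Finsupp.equivMapDomain (Equiv.inv G) x.coeff)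

/-- Coefficientwise dot product on a group algebra. -/
noncomputable def dotMA (F : Type*) [Field F] (G : Type*) [Group G] [Fintype G]
    (u v : MonoidAlgebra F G) : F :=
  ∑ g : G, u.coeff g * v.coeff g

lemma starMA_apply (F : Type*) [Field F] (G : Type*) [Group G]
    (x : MonoidAlgebra F G) (g : G) : (starMA F G x).coeff g = x.coeff g⁻¹ := rfl

lemma starMA_starMA (F : Type*) [Field F] (G : Type*) [Group G]
    (x : MonoidAlgebra F G) : starMA F G (starMA F G x) = x := by
  ext g; simp [starMA_apply]

lemma key (F : Type*) [Field F] (G : Type*) [Group G] [Fintype G]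
    (c x : MonoidAlgebra F G) (h : G) :
    (c * starMA F G x).coeff h = dotMA F G (MonoidAlgebra.single h⁻¹ 1 * c) x := by
  rw [MonoidAlgebra.mul_apply_left, Finsupp.sum_fintype _ _ (by simp), dotMA]
  exact Fintype.sum_equiv (Equiv.mulLeft h⁻¹) _ _ (fun a => by
    simp [starMA_apply, mul_inv_rev])

/-- The dual code of a left ideal `C` of `F[G]` is the image under the star
antiautomorphism of the right annihilator of `C`. -/
theorem stmt_2 (F : Type*) [Field F] (G : Type*) [Group G] [Fintype G]
    (C : Ideal (MonoidAlgebra F G)) :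
    {x : MonoidAlgebra F G | ∀ c ∈ C, dotMA F G c x = 0} =
      starMA F G '' {x : MonoidAlgebra F G | ∀ c ∈ C, c * x = 0} := by
  ext x
  constructor
  · intro hx
    refine ⟨starMA F G x, ?_, starMA_starMA F G x⟩
    intro c hc
    ext h
    rw [key]
    simpa using hx _ (C.mul_mem_left (MonoidAlgebra.single h⁻¹ 1) hc)
  · rintro ⟨y, hy, rfl⟩ c hc
    have := congrArg (fun f : MonoidAlgebra F G => f.coeff (1 : G)) (hy c hc)
    have hk := key F G c (starMA F G y) 1
    rw [starMA_starMA] at hk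
    rw [this] at hk
    rw [inv_one, show (MonoidAlgebra.single (1:G) (1:F)) = 1 from rfl, one_mul] at hk
    simp only [MonoidAlgebra.coeff_zero, Finsupp.coe_zero, Pi.zero_apply] at hk
    exact hk.symm
end

section
/- Let q and n be coprime prime-power and positive integer respectively, and let g be a monic divisor of xⁿ − 1 in F_q[x]. Then the element e_g(x) := −(1/n)·[((g*)′)*]·((xⁿ−1)/g(x)) is an idempotent of the quotient ring F_q[x]/(xⁿ − 1), where g*(x) = x^{deg g} g(1/x) is the reciprocal polynomial and for a polynomial P, (P′)* denotes x^{deg P − 1} P′(1/x). -/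
open Polynomial

/-- Auxiliary identity: `reflect (deg g - 1) (derivative (reflect (deg g) g))
  = deg g • g - X * g'`. -/
theorem reflect_deriv {F : Type*} [Field F] (g : Polynomial F) :
    reflect (g.natDegree - 1) (derivative (reflect g.natDegree g)) =
      C (g.natDegree : F) * g - X * derivative g := by
  rcases Nat.eq_zero_or_pos g.natDegree with h0 | hpos
  · obtain ⟨a, rfl⟩ : ∃ a, g = C a := ⟨g.coeff 0, (Polynomial.eq_C_of_natDegree_eq_zero h0)⟩
    simp [h0]
  set d := g.natDegree with hd
  ext i
  simp only [coeff_reflect, coeff_derivative, coeff_sub, coeff_C_mul]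
  rcases le_or_gt i (d - 1) with hi | hi
  · rw [revAt_le hi]
    have h1 : d - 1 - i + 1 = d - i := by omega
    rw [h1, revAt_le (Nat.sub_le _ _), show d - (d - i) = i by omega]
    rcases Nat.eq_zero_or_pos i with rfl | hipos
    · rw [show d - 1 - 0 = d - 1 by omega, Nat.cast_sub (by omega : 1 ≤ d)]
      simp [mul_comm]
    · rw [show i = i - 1 + 1 by omega, coeff_X_mul, coeff_derivative,
        show i - 1 + 1 = i by omega,
        Nat.cast_sub (show i ≤ d - 1 by omega), Nat.cast_sub (show 1 ≤ d by omega),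
        Nat.cast_sub (show 1 ≤ i by omega)]
      push_cast; ring
  · rw [revAt_eq_self_of_lt hi]
    have hid : d ≤ i := by omega
    rw [revAt_eq_self_of_lt (by omega : d < i + 1),
      coeff_eq_zero_of_natDegree_lt (show d < i + 1 by omega), zero_mul,
      show i = i - 1 + 1 by omega, coeff_X_mul, coeff_derivative,
      show i - 1 + 1 = i by omega]
    rcases eq_or_lt_of_le hid with rfl | hlt
    · rw [Nat.cast_sub (by omega : 1 ≤ d)]; push_cast; ring
    · rw [coeff_eq_zero_of_natDegree_lt hlt]; simp

/-- The idempotent `e_g(x) = -(1/n)·[((g*)′)*]·((xⁿ-1)/g)` attached to a monic divisor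
`g` of `xⁿ - 1`, as a polynomial.  Here `g* = reflect (deg g) g` is the reciprocal
polynomial, and `(P′)* = x^(deg P - 1)·P′(1/x) = reflect (deg P - 1) P′`. -/
noncomputable def eIdem (F : Type*) [Field F] (n : ℕ) (g : Polynomial F) : Polynomial F :=
  C (-(n : F)⁻¹) *
    reflect (g.natDegree - 1) (derivative (reflect g.natDegree g)) *
    ((X ^ n - 1) /ₘ g)

/-- For a monic divisor `g` of `xⁿ - 1` over a finite field `F_q` with `gcd(q, n) = 1`,
the element `e_g` is an idempotent of `F_q[x]/(xⁿ - 1)`. -/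
theorem stmt_9 (F : Type*) [Field F] [Fintype F] (n : ℕ) (hn : 0 < n)
    (hq : Nat.Coprime (Fintype.card F) n)
    (g : Polynomial F) (hg : g.Monic) (hdvd : g ∣ X ^ n - 1) :
    IsIdempotentElem
      (Ideal.Quotient.mk (Ideal.span {(X ^ n - 1 : Polynomial F)}) (eIdem F n g)) := by
  have hnF : (n : F) ≠ 0 := by
    intro h
    have hp : (ringChar F).Prime := CharP.char_is_prime F (ringChar F)
    have hdn : ringChar F ∣ n := (CharP.cast_eq_zero_iff F (ringChar F) n).1 h
    obtain ⟨k, hk⟩ := FiniteField.card F (ringChar F)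
    have hdc : ringChar F ∣ Fintype.card F := by
      rw [hk.2]; exact dvd_pow_self _ (by exact_mod_cast k.pos.ne')
    exact hp.one_lt.ne' (Nat.dvd_one.1 ((Nat.dvd_gcd hdc hdn).trans hq.dvd))
  set s : Polynomial F := X ^ n - 1 with hs
  set h : Polynomial F := s /ₘ g with hh
  have hgh : g * h = s := by
    conv_rhs => rw [← modByMonic_add_div s g]
    rw [(modByMonic_eq_zero_iff_dvd hg).2 hdvd, zero_add]
  set I := Ideal.span {s}
  set π := Ideal.Quotient.mk I with hπ
  have hs0 : π s = 0 := Ideal.Quotient.eq_zero_iff_mem.2 (Ideal.subset_span rfl)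
  have hder : C (n : F) * X ^ n = X * (derivative g * h) + X * (g * derivative h) := by
    have h1 : derivative s = C (n : F) * X ^ (n - 1) := by
      rw [hs, derivative_sub, derivative_one, derivative_X_pow, sub_zero]
    have h2 : derivative s = derivative g * h + g * derivative h := by
      rw [← hgh, derivative_mul]
    calc C (n : F) * X ^ n = X * (C (n:F) * X ^ (n-1)) := by
          rw [← mul_assoc, mul_comm X, mul_assoc, ← pow_succ']
          congr 2
          omega
      _ = X * (derivative g * h + g * derivative h) := by rw [← h1, h2]
      _ = _ := by ring
  set u := π (X * (derivative g * h)) with hu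
  set v := π (X * (g * derivative h)) with hv
  set γ := π (C (n : F)⁻¹) with hγ
  have hXn : π (X ^ n) = 1 := by
    have h3 : π (X ^ n) - 1 = π s := by rw [hs, map_sub, map_one]
    rw [hs0] at h3
    linear_combination h3
  have huv : u + v = π (C (n : F)) := by
    rw [hu, hv, ← map_add, ← hder, map_mul, hXn, mul_one]
  have huv0 : u * v = 0 := by
    rw [hu, hv, ← map_mul]
    have h4 : X * (derivative g * h) * (X * (g * derivative h))
        = X ^ 2 * derivative g * derivative h * s := by
      rw [← hgh]; ring
    rw [h4, map_mul, hs0, mul_zero]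
  have hγn : γ * π (C (n : F)) = 1 := by
    rw [hγ, ← map_mul, ← C_mul, inv_mul_cancel₀ hnF, C_1, map_one]
  have he : π (eIdem F n g) = γ * u := by
    have h5 : eIdem F n g
        = C (-(n : F)⁻¹) * C (g.natDegree : F) * s - C (-(n : F)⁻¹) * (X * (derivative g * h)) := by
      rw [eIdem, reflect_deriv, ← hh, ← hgh]; ring
    rw [h5, map_sub, map_mul, map_mul, hs0, mul_zero, zero_sub, hu, hγ, ← map_mul, ← map_neg]
    congr 1
    rw [C_neg]
    ring
  rw [IsIdempotentElem, he]
  have hv' : v = π (C (n : F)) - u := by rw [← huv]; ring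
  have husq : u * u = u * π (C (n : F)) := by
    have : u * (π (C (n:F)) - u) = 0 := by rw [← hv', huv0]
    linear_combination -this
  calc γ * u * (γ * u) = γ * (u * u) * γ := by ring
    _ = γ * (u * π (C (n:F))) * γ := by rw [husq]
    _ = γ * u * (γ * π (C (n:F))) := by ring
    _ = γ * u := by rw [hγn, mul_one]
end

section
/- Let C be a left ideal of F[D_n] and define C_ext := F[D_n]·pr_a(C), the left ideal generated by the projection pr_a(C) ⊆ F[⟨a⟩]. Then C ⊆ C_ext; moreover, for any ideal T of F[⟨a⟩], if C ⊆ F[D_n]·T then pr_a(C) ⊆ T and hence C_ext ⊆ F[D_n]·T. In particular C_ext is the smallest ⟨a⟩-induced left ideal of F[D_n] containing C. -/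
open Polynomial DihedralGroup

/-- The projection `pr_a : F[D_n] → F[⟨a⟩]`, `P(a) + b·Q(a) ↦ P(a)`, with the cyclic
group `⟨a⟩` of order `n` modelled as `Multiplicative (ZMod n)`. -/
noncomputable def prA (F : Type*) [Field F] (n : ℕ) [NeZero n]
    (u : MonoidAlgebra F (DihedralGroup n)) : MonoidAlgebra F (Multiplicative (ZMod n)) :=
  ∑ z : ZMod n, u.coeff (r z) • MonoidAlgebra.of F (Multiplicative (ZMod n)) (Multiplicative.ofAdd z)

/-- The embedding `F[⟨a⟩] → F[D_n]` induced by `z ↦ a^z = r z`. -/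
noncomputable def iotaA (F : Type*) [Field F] (n : ℕ) :
    MonoidAlgebra F (Multiplicative (ZMod n)) →ₐ[F] MonoidAlgebra F (DihedralGroup n) :=
  MonoidAlgebra.lift F (MonoidAlgebra F (DihedralGroup n)) (Multiplicative (ZMod n))
    { toFun := fun z => MonoidAlgebra.of F (DihedralGroup n) (r z.toAdd)
      map_one' := by
        show MonoidAlgebra.of F (DihedralGroup n) (r (Multiplicative.toAdd (1 : Multiplicative (ZMod n)))) = 1
        rw [show r (Multiplicative.toAdd (1 : Multiplicative (ZMod n))) =
          (1 : DihedralGroup n) from rfl, map_one]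
      map_mul' := fun z w => by
        show MonoidAlgebra.of F (DihedralGroup n) (r (Multiplicative.toAdd (z * w))) = _
        rw [show r (Multiplicative.toAdd (z * w)) = r z.toAdd * r w.toAdd from rfl, map_mul] }

section Aux

variable {F : Type*} [Field F] {n : ℕ} [NeZero n]

set_option linter.unusedSectionVars false

lemma aux_sr_inv (i : ZMod n) : (sr i : DihedralGroup n)⁻¹ = sr i := rfl

lemma prA_apply (u : MonoidAlgebra F (DihedralGroup n)) (m : Multiplicative (ZMod n)) :
    (prA F n u).coeff m = u.coeff (r m.toAdd) := by
  classical
  simp only [prA, MonoidAlgebra.of_apply]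
  rw [MonoidAlgebra.coeff_sum, Finsupp.finset_sum_apply]
  rw [Finset.sum_eq_single m.toAdd (fun z _ hz => by
    rw [MonoidAlgebra.coeff_smul_apply, MonoidAlgebra.coeff_single, Finsupp.single_apply, if_neg, smul_zero]
    intro h; exact hz (by simpa using congrArg Multiplicative.toAdd h)) (by simp)]
  simp [Finsupp.single_apply]

lemma prA_add (u v : MonoidAlgebra F (DihedralGroup n)) :
    prA F n (u + v) = prA F n u + prA F n v := by
  ext m
  rw [MonoidAlgebra.coeff_add, Finsupp.add_apply, prA_apply, prA_apply, prA_apply, MonoidAlgebra.coeff_add, Finsupp.add_apply]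

lemma prA_zero : prA F n (0 : MonoidAlgebra F (DihedralGroup n)) = 0 := by
  ext m; rw [prA_apply]; rfl

lemma iotaA_single (z : Multiplicative (ZMod n)) (c : F) :
    iotaA F n (MonoidAlgebra.single z c) = MonoidAlgebra.single (r z.toAdd) c := by
  rw [iotaA, MonoidAlgebra.lift_single]
  simp [MonoidAlgebra.of_apply]

lemma prA_iotaA (p : MonoidAlgebra F (Multiplicative (ZMod n))) :
    prA F n (iotaA F n p) = p := by
  induction p using MonoidAlgebra.induction_linear with
  | zero => rw [map_zero, prA_zero]
  | add f g hf hg => rw [map_add, prA_add, hf, hg]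
  | single z c =>
      ext m
      rw [iotaA_single, prA_apply]
      simp [Finsupp.single_apply, r.injEq]

lemma prA_iotaA_mul (p : MonoidAlgebra F (Multiplicative (ZMod n)))
    (u : MonoidAlgebra F (DihedralGroup n)) :
    prA F n (iotaA F n p * u) = p * prA F n u := by
  induction p using MonoidAlgebra.induction_linear with
  | zero => rw [map_zero, zero_mul, zero_mul, prA_zero]
  | add f g hf hg => rw [map_add, add_mul, prA_add, hf, hg, add_mul]
  | single z c =>
      ext m
      rw [iotaA_single, prA_apply]
      show (MonoidAlgebra.single (r z.toAdd) c * u).coeff (r m.toAdd) = _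
      rw [MonoidAlgebra.coeff_single_mul_apply]
      show _ = (MonoidAlgebra.single z c * prA F n u).coeff m
      rw [MonoidAlgebra.coeff_single_mul_apply, prA_apply]
      congr 2

lemma iotaA_apply_r (p : MonoidAlgebra F (Multiplicative (ZMod n))) (w : ZMod n) :
    (iotaA F n p).coeff (r w) = p.coeff (Multiplicative.ofAdd w) := by
  induction p using MonoidAlgebra.induction_linear with
  | zero => rw [map_zero]; rfl
  | add f g hf hg => rw [map_add, MonoidAlgebra.coeff_add, Finsupp.add_apply, hf, hg, MonoidAlgebra.coeff_add, Finsupp.add_apply]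
  | single z c =>
      rw [iotaA_single]
      rw [MonoidAlgebra.coeff_single, MonoidAlgebra.coeff_single, Finsupp.single_apply, Finsupp.single_apply]
      by_cases h : Multiplicative.toAdd z = w
      · rw [if_pos (by rw [r.injEq]; exact h), if_pos (by rw [← h]; rfl)]
      · rw [if_neg (by rw [r.injEq]; exact h), if_neg (fun hh => h (by rw [hh]; rfl))]

lemma iotaA_apply_sr (p : MonoidAlgebra F (Multiplicative (ZMod n))) (w : ZMod n) :
    (iotaA F n p).coeff (sr w) = 0 := by
  induction p using MonoidAlgebra.induction_linear with
  | zero => rw [map_zero]; rfl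
  | add f g hf hg => rw [map_add, MonoidAlgebra.coeff_add, Finsupp.add_apply, hf, hg, add_zero]
  | single z c =>
      rw [iotaA_single]
      simp [Finsupp.single_apply]

lemma decompD (u : MonoidAlgebra F (DihedralGroup n)) :
    u = iotaA F n (prA F n u)
      + MonoidAlgebra.single (sr (0 : ZMod n)) (1 : F)
          * iotaA F n (prA F n (MonoidAlgebra.single (sr (0 : ZMod n)) (1 : F) * u)) := by
  ext g
  rw [MonoidAlgebra.coeff_add, Finsupp.add_apply]
  rcases g with w | w
  · rw [iotaA_apply_r, prA_apply, MonoidAlgebra.coeff_single_mul_apply, aux_sr_inv]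
    rw [show (sr (0 : ZMod n) * r w : DihedralGroup n) = sr w by rw [sr_mul_r, zero_add]]
    rw [iotaA_apply_sr]
    simp
  · rw [iotaA_apply_sr, MonoidAlgebra.coeff_single_mul_apply, aux_sr_inv]
    rw [show (sr (0 : ZMod n) * sr w : DihedralGroup n) = r w by rw [sr_mul_sr, sub_zero]]
    rw [iotaA_apply_r, prA_apply, MonoidAlgebra.coeff_single_mul_apply, aux_sr_inv]
    rw [show (sr (0 : ZMod n) * r (Multiplicative.toAdd (Multiplicative.ofAdd w)) : DihedralGroup n)
      = sr w by rw [sr_mul_r]; simp]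
    simp

lemma prB_iotaA_mul (p : MonoidAlgebra F (Multiplicative (ZMod n)))
    (u : MonoidAlgebra F (DihedralGroup n)) :
    ∃ q, prA F n (MonoidAlgebra.single (sr (0 : ZMod n)) (1 : F) * (iotaA F n p * u))
      = q * prA F n (MonoidAlgebra.single (sr (0 : ZMod n)) (1 : F) * u) := by
  induction p using MonoidAlgebra.induction_linear with
  | zero => exact ⟨0, by rw [map_zero, zero_mul, mul_zero, prA_zero, zero_mul]⟩
  | add f g hf hg =>
      obtain ⟨q1, h1⟩ := hf; obtain ⟨q2, h2⟩ := hg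
      exact ⟨q1 + q2, by rw [map_add, add_mul, mul_add, prA_add, h1, h2, add_mul]⟩
  | single z c =>
      refine ⟨MonoidAlgebra.single z⁻¹ c, ?_⟩
      ext m
      rw [prA_apply, iotaA_single, MonoidAlgebra.coeff_single_mul_apply, one_mul,
        MonoidAlgebra.coeff_single_mul_apply, MonoidAlgebra.coeff_single_mul_apply, prA_apply,
        MonoidAlgebra.coeff_single_mul_apply, one_mul]
      congr 1
      rw [show ((r (Multiplicative.toAdd z) : DihedralGroup n)⁻¹ : DihedralGroup n)
        = r (-Multiplicative.toAdd z) from rfl, aux_sr_inv, sr_mul_r, zero_add, r_mul_sr,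
        sr_mul_r, zero_add]
      congr 1
      rw [sub_neg_eq_add]
      simp
      ring

lemma b0_mul_b0 :
    (MonoidAlgebra.single (sr (0 : ZMod n)) (1 : F))
      * MonoidAlgebra.single (sr (0 : ZMod n)) (1 : F) = 1 := by
  rw [MonoidAlgebra.single_mul_single, sr_mul_sr, sub_zero, ← one_def, mul_one]
  rfl

end Aux

/-- `C ⊆ C_ext := F[D_n]·pr_a(C)`, and for any ideal `T` of `F[⟨a⟩]` with
`C ⊆ F[D_n]·T` one has `pr_a(C) ⊆ T` and `C_ext ⊆ F[D_n]·T`; so `C_ext` is the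
smallest `⟨a⟩`-induced left ideal containing `C`. -/
theorem stmt_14 (F : Type*) [Field F] (n : ℕ) [NeZero n]
    (C : Ideal (MonoidAlgebra F (DihedralGroup n))) :
    C ≤ Ideal.span (iotaA F n '' (prA F n '' ↑C)) ∧
    ∀ T : Ideal (MonoidAlgebra F (Multiplicative (ZMod n))),
      (C : Set (MonoidAlgebra F (DihedralGroup n))) ⊆ ↑(Ideal.span (iotaA F n '' ↑T)) →
        prA F n '' ↑C ⊆ ↑T ∧
        Ideal.span (iotaA F n '' (prA F n '' ↑C)) ≤ Ideal.span (iotaA F n '' ↑T) := by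
  classical
  set b0 : MonoidAlgebra F (DihedralGroup n) := MonoidAlgebra.single (sr (0 : ZMod n)) (1 : F) with hb0
  constructor
  · intro u hu
    nth_rewrite 1 [decompD u]
    refine add_mem (Ideal.subset_span ⟨prA F n u, ⟨u, hu, rfl⟩, rfl⟩) ?_
    exact Ideal.mul_mem_left _ _ (Ideal.subset_span
      ⟨prA F n (b0 * u), ⟨b0 * u, C.mul_mem_left b0 hu, rfl⟩, rfl⟩)
  · intro T hT
    have key : ∀ x ∈ Ideal.span (iotaA F n '' (T : Set (MonoidAlgebra F (Multiplicative (ZMod n))))),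
        prA F n x ∈ T ∧ prA F n (b0 * x) ∈ T := by
      intro x hx
      induction hx using Submodule.span_induction with
      | mem x hxm =>
          obtain ⟨t, ht, rfl⟩ := hxm
          refine ⟨by rw [prA_iotaA]; exact ht, ?_⟩
          obtain ⟨q, hq⟩ := prB_iotaA_mul t (1 : MonoidAlgebra F (DihedralGroup n))
          rw [mul_one] at hq
          rw [hq]
          exact T.mul_mem_left q (by
            have : prA F n (b0 * (1 : MonoidAlgebra F (DihedralGroup n))) = 0 := by
              rw [mul_one]
              ext m
              rw [prA_apply, hb0, MonoidAlgebra.coeff_single, Finsupp.single_apply, if_neg (by simp)]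
              rfl
            rw [this]; exact T.zero_mem)
      | zero => refine ⟨by rw [prA_zero]; exact T.zero_mem, by rw [mul_zero, prA_zero]; exact T.zero_mem⟩
      | add x y hx hy ihx ihy =>
          exact ⟨by rw [prA_add]; exact T.add_mem ihx.1 ihy.1,
            by rw [mul_add, prA_add]; exact T.add_mem ihx.2 ihy.2⟩
      | smul a x hx ih =>
          rw [smul_eq_mul]
          have hdec := decompD a
          obtain ⟨q1, hq1⟩ := prB_iotaA_mul (prA F n a) x
          obtain ⟨q2, hq2⟩ := prB_iotaA_mul (prA F n (b0 * a)) x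
          constructor
          · rw [show a * x = iotaA F n (prA F n a) * x + b0 * (iotaA F n (prA F n (b0 * a)) * x) by
              nth_rewrite 1 [hdec]; rw [add_mul, mul_assoc]]
            rw [prA_add, prA_iotaA_mul, hq2]
            exact T.add_mem (T.mul_mem_left _ ih.1) (T.mul_mem_left _ ih.2)
          · rw [show b0 * (a * x) = b0 * (iotaA F n (prA F n a) * x)
                + iotaA F n (prA F n (b0 * a)) * x by
              nth_rewrite 1 [hdec]
              rw [add_mul, mul_add, mul_assoc, ← mul_assoc b0 b0, b0_mul_b0, one_mul]]
            rw [prA_add, hq1, prA_iotaA_mul]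
            exact T.add_mem (T.mul_mem_left _ ih.2) (T.mul_mem_left _ ih.1)
    constructor
    · rintro _ ⟨u, hu, rfl⟩
      exact (key u (hT hu)).1
    · refine Ideal.span_le.mpr ?_
      rintro _ ⟨_, ⟨u, hu, rfl⟩, rfl⟩
      exact Ideal.subset_span ⟨prA F n u, (key u (hT hu)).1, rfl⟩
end
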